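/- Let (X, Σ, μ) be a strictly localizable measure space and M ⊆ L¹(X, Σ, μ) a separable subset. Then there exist a σ-finite measurable set Ω ⊆ X and a countably generated σ-subalgebra Σ̃ of Σ on Ω such that L¹(Ω, Σ̃, μ) is a closed sublattice of L¹(X, Σ, μ) containing M; in particular M is contained in a 1-complemented separable sublattice of L¹(X, Σ, μ) which is itself an L¹-space. -/

import Mathlib

open MeasureTheory

/-- A measure space is *strictly localizable* if it decomposes into a partition of
measurable sets of finite measure which determines measurability and measure. -/
def StrictlyLocalizable {X : Type*} [MeasurableSpace X] (μ : Measure X) : Prop :=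
  ∃ (ι : Type) (X' : ι → Set X),
    Pairwise (Function.onFun Disjoint X') ∧
    (⋃ i, X' i) = Set.univ ∧
    (∀ i, MeasurableSet (X' i) ∧ μ (X' i) < ⊤) ∧
    (∀ A : Set X, (∀ i, MeasurableSet (A ∩ X' i)) → MeasurableSet A) ∧
    (∀ A : Set X, MeasurableSet A → μ A = ∑' i, μ (A ∩ X' i))

namespace SepSubAux

open MeasureTheory Set TopologicalSpace

variable {α : Type*} [m0 : MeasurableSpace α] (μ : Measure α)

lemma indicator_ae_congr {s : Set α} (hs : MeasurableSet s) {f g : α → ℝ}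
    (h : f =ᵐ[μ.restrict s] g) : s.indicator f =ᵐ[μ] s.indicator g := by
  filter_upwards [(ae_restrict_iff' hs).1 h] with x hx
  by_cases hxs : x ∈ s
  · simp [hxs, hx hxs]
  · simp [hxs]

/-- Restriction as a continuous linear map `L¹(μ) → L¹(μ.restrict s)`. -/
noncomputable def restrictL (s : Set α) : Lp ℝ 1 μ →L[ℝ] Lp ℝ 1 (μ.restrict s) :=
  LinearMap.mkContinuous
    { toFun := fun f => ((Lp.memLp f).restrict s).toLp (f : α → ℝ)
      map_add' := fun f g => by
        apply Lp.ext
        have h1 := MemLp.coeFn_toLp ((Lp.memLp (f + g)).restrict s)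
        have h2 := MemLp.coeFn_toLp ((Lp.memLp f).restrict s)
        have h3 := MemLp.coeFn_toLp ((Lp.memLp g).restrict s)
        have h4 := Lp.coeFn_add (((Lp.memLp f).restrict s).toLp (f : α → ℝ))
          (((Lp.memLp g).restrict s).toLp (g : α → ℝ))
        have h5 : ((f + g : Lp ℝ 1 μ) : α → ℝ) =ᵐ[μ.restrict s] (f : α → ℝ) + (g : α → ℝ) :=
          ae_restrict_of_ae (Lp.coeFn_add f g)
        filter_upwards [h1, h2, h3, h4, h5] with x h1 h2 h3 h4 h5
        simp only [h1, h4, h5, Pi.add_apply, h2, h3]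
      map_smul' := fun c f => by
        apply Lp.ext
        have h1 := MemLp.coeFn_toLp ((Lp.memLp (c • f)).restrict s)
        have h2 := MemLp.coeFn_toLp ((Lp.memLp f).restrict s)
        have h4 := Lp.coeFn_smul c (((Lp.memLp f).restrict s).toLp (f : α → ℝ))
        have h5 : ((c • f : Lp ℝ 1 μ) : α → ℝ) =ᵐ[μ.restrict s] c • (f : α → ℝ) :=
          ae_restrict_of_ae (Lp.coeFn_smul c f)
        filter_upwards [h1, h2, h4, h5] with x h1 h2 h4 h5
        simp only [RingHom.id_apply, h1, h4, h5, Pi.smul_apply, h2] }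
    1 (fun f => by
      rw [one_mul]
      show ‖((Lp.memLp f).restrict s).toLp (f : α → ℝ)‖ ≤ ‖f‖
      rw [Lp.norm_toLp, Lp.norm_def]
      exact ENNReal.toReal_mono (Lp.memLp f).2.ne
        (eLpNorm_mono_measure _ Measure.restrict_le_self))

lemma restrictL_coe (s : Set α) (f : Lp ℝ 1 μ) :
    (restrictL μ s f : α → ℝ) =ᵐ[μ.restrict s] (f : α → ℝ) :=
  MemLp.coeFn_toLp ((Lp.memLp f).restrict s)

/-- Extension by zero as a continuous linear map `L¹(μ.restrict s) → L¹(μ)`. -/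
noncomputable def extendL (s : Set α) (hs : MeasurableSet s) :
    Lp ℝ 1 (μ.restrict s) →L[ℝ] Lp ℝ 1 μ :=
  LinearMap.mkContinuous
    { toFun := fun f => ((memLp_indicator_iff_restrict (ε := ℝ) (p := 1) hs).2 (Lp.memLp f)).toLp
        (s.indicator (f : α → ℝ))
      map_add' := fun f g => by
        apply Lp.ext
        have h1 := MemLp.coeFn_toLp ((memLp_indicator_iff_restrict (ε := ℝ) (p := 1) hs).2 (Lp.memLp (f + g)))
        have h2 := MemLp.coeFn_toLp ((memLp_indicator_iff_restrict (ε := ℝ) (p := 1) hs).2 (Lp.memLp f))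
        have h3 := MemLp.coeFn_toLp ((memLp_indicator_iff_restrict (ε := ℝ) (p := 1) hs).2 (Lp.memLp g))
        have h4 := Lp.coeFn_add
          (((memLp_indicator_iff_restrict (ε := ℝ) (p := 1) hs).2 (Lp.memLp f)).toLp (s.indicator (f : α → ℝ)))
          (((memLp_indicator_iff_restrict (ε := ℝ) (p := 1) hs).2 (Lp.memLp g)).toLp (s.indicator (g : α → ℝ)))
        have h5 : s.indicator ((f + g : Lp ℝ 1 (μ.restrict s)) : α → ℝ)
            =ᵐ[μ] s.indicator ((f : α → ℝ) + (g : α → ℝ)) :=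
          indicator_ae_congr μ hs (Lp.coeFn_add f g)
        filter_upwards [h1, h2, h3, h4, h5] with x h1 h2 h3 h4 h5
        rw [h1, h5, h4, Pi.add_apply, h2, h3]
        by_cases hxs : x ∈ s <;> simp [Set.indicator_of_mem, Set.indicator_of_notMem, hxs]
      map_smul' := fun c f => by
        apply Lp.ext
        have h1 := MemLp.coeFn_toLp ((memLp_indicator_iff_restrict (ε := ℝ) (p := 1) hs).2 (Lp.memLp (c • f)))
        have h2 := MemLp.coeFn_toLp ((memLp_indicator_iff_restrict (ε := ℝ) (p := 1) hs).2 (Lp.memLp f))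
        have h4 := Lp.coeFn_smul c
          (((memLp_indicator_iff_restrict (ε := ℝ) (p := 1) hs).2 (Lp.memLp f)).toLp (s.indicator (f : α → ℝ)))
        have h5 : s.indicator ((c • f : Lp ℝ 1 (μ.restrict s)) : α → ℝ)
            =ᵐ[μ] s.indicator (c • (f : α → ℝ)) :=
          indicator_ae_congr μ hs (Lp.coeFn_smul c f)
        filter_upwards [h1, h2, h4, h5] with x h1 h2 h4 h5
        rw [RingHom.id_apply, h1, h5, h4, Pi.smul_apply, h2]
        by_cases hxs : x ∈ s <;> simp [Set.indicator_of_mem, Set.indicator_of_notMem, hxs] }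
    1 (fun f => by
      rw [one_mul]
      show ‖((memLp_indicator_iff_restrict (ε := ℝ) (p := 1) hs).2 (Lp.memLp f)).toLp (s.indicator (f : α → ℝ))‖ ≤ ‖f‖
      rw [Lp.norm_toLp, eLpNorm_indicator_eq_eLpNorm_restrict hs, Lp.norm_def])

lemma extendL_coe (s : Set α) (hs : MeasurableSet s) (f : Lp ℝ 1 (μ.restrict s)) :
    (extendL μ s hs f : α → ℝ) =ᵐ[μ] s.indicator (f : α → ℝ) :=
  MemLp.coeFn_toLp ((memLp_indicator_iff_restrict (ε := ℝ) (p := 1) hs).2 (Lp.memLp f))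

lemma norm_restrictL_le (s : Set α) : ‖restrictL μ s‖ ≤ 1 :=
  LinearMap.mkContinuous_norm_le _ zero_le_one _

lemma norm_extendL_le (s : Set α) (hs : MeasurableSet s) : ‖extendL μ s hs‖ ≤ 1 :=
  LinearMap.mkContinuous_norm_le _ zero_le_one _

end SepSubAux


set_option maxHeartbeats 2000000 in
set_option synthInstance.maxHeartbeats 1000000 in
/-- Every separable subset `M` of `L¹` over a strictly localizable measure
space is contained in an `L¹`-sublattice `F = L¹(Ω, Σ̃, μ)` associated with a σ-finite
measurable set `Ω` and a countably generated sub-σ-algebra `Σ̃`; moreover `F` is a separable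
closed sublattice which is the range of a norm-one projection. -/
theorem separable_subset_contained_in_countably_generated_sublattice
    {X : Type*} [m0 : MeasurableSpace X] (μ : Measure X)
    (hSL : StrictlyLocalizable μ)
    (M : Set (Lp ℝ 1 μ)) (hM : TopologicalSpace.IsSeparable M) :
    ∃ (Ω : Set X) (m : MeasurableSpace X),
      m ≤ m0 ∧ @MeasurableSpace.CountablyGenerated X m ∧
      MeasurableSet[m] Ω ∧ SigmaFinite (μ.restrict Ω) ∧
      ∃ F : Submodule ℝ (Lp ℝ 1 μ),
        (F : Set (Lp ℝ 1 μ)) =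
          {f : Lp ℝ 1 μ | ∃ g : X → ℝ, Measurable[m] g ∧ (∀ x ∉ Ω, g x = 0) ∧
            (f : X → ℝ) =ᵐ[μ] g} ∧
        M ⊆ (F : Set (Lp ℝ 1 μ)) ∧
        IsClosed (F : Set (Lp ℝ 1 μ)) ∧
        (∀ f ∈ F, |f| ∈ F) ∧
        TopologicalSpace.IsSeparable (F : Set (Lp ℝ 1 μ)) ∧
        ∃ P : Lp ℝ 1 μ →L[ℝ] Lp ℝ 1 μ,
          ‖P‖ ≤ 1 ∧ Set.range P = (F : Set (Lp ℝ 1 μ)) ∧ ∀ f ∈ F, P f = f := by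
  classical
  obtain ⟨c, hc_count, hc_sub⟩ := hM
  obtain ⟨e, he⟩ : ∃ e : ℕ → Lp ℝ 1 μ, insert 0 c = Set.range e :=
    (hc_count.insert 0).exists_eq_range (Set.insert_nonempty _ _)
  set g : ℕ → X → ℝ := fun n => (e n : X → ℝ) with hgdef
  set S : Set (Set X) := Set.range (fun p : ℕ × ℚ => g p.1 ⁻¹' Set.Iio (p.2 : ℝ)) with hSdef
  set m : MeasurableSpace X := MeasurableSpace.generateFrom S with hmdef
  have hm : m ≤ m0 := by
    rw [hmdef]
    refine MeasurableSpace.generateFrom_le ?_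
    rintro _ ⟨⟨n, q⟩, rfl⟩
    exact (Lp.stronglyMeasurable (e n)).measurable measurableSet_Iio
  have hCG : @MeasurableSpace.CountablyGenerated X m := ⟨⟨S, Set.countable_range _, hmdef⟩⟩
  have hgm : ∀ n, Measurable[m] (g n) := by
    intro n
    have key : @Measurable X ℝ m
        (MeasurableSpace.generateFrom (⋃ q : ℚ, {Set.Iio (q : ℝ)})) (g n) := by
      refine measurable_generateFrom ?_
      rintro t ht
      simp only [Set.mem_iUnion, Set.mem_singleton_iff] at ht
      obtain ⟨q, rfl⟩ := ht
      exact MeasurableSpace.measurableSet_generateFrom ⟨(n, q), rfl⟩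
    have hreq : (inferInstance : MeasurableSpace ℝ) =
        MeasurableSpace.generateFrom (⋃ q : ℚ, {Set.Iio (q : ℝ)}) := by
      rw [BorelSpace.measurable_eq (α := ℝ), Real.borel_eq_generateFrom_Iio_rat]
    exact key.mono le_rfl hreq.le
  set Ω : Set X := ⋃ n, g n ⁻¹' {(0 : ℝ)}ᶜ with hΩdef
  have hΩm : MeasurableSet[m] Ω :=
    MeasurableSet.iUnion fun n => (hgm n) (measurableSet_singleton 0).compl
  have hΩ0 : MeasurableSet[m0] Ω := hm _ hΩm
  have hnot : ∀ x, x ∉ Ω → ∀ n, g n x = 0 := by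
    intro x hx n
    by_contra h
    exact hx (Set.mem_iUnion.2 ⟨n, h⟩)
  have hInt : ∀ n, Integrable (g n) μ := fun n => L1.integrable_coeFn (e n)
  set A : ℕ × ℕ → Set X := fun p => {x | (1 : ℝ) / ((p.2 : ℝ) + 1) ≤ |g p.1 x|} with hAdef
  have hAfin : ∀ p, μ (A p) < ⊤ := by
    intro p
    have hpos : (0:ℝ) < 1 / ((p.2 : ℝ) + 1) := by positivity
    exact (hInt p.1).abs.measure_ge_lt_top hpos
  have hAm : ∀ p, MeasurableSet[m] (A p) := fun p =>
    measurableSet_le measurable_const (hgm p.1).abs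
  have hcover : ∀ x, x ∈ Ω → ∃ p, x ∈ A p := by
    intro x hx
    obtain ⟨n, hn⟩ := Set.mem_iUnion.1 hx
    have h0 : 0 < |g n x| := abs_pos.2 (by simpa using hn)
    obtain ⟨k, hk⟩ := exists_nat_one_div_lt h0
    exact ⟨(n, k), le_of_lt hk⟩
  set SS : Set (Set X) := insert Ωᶜ (Set.range A) with hSSdef
  have hSS_count : SS.Countable := (Set.countable_range A).insert _
  have hSS_cover : ⋃₀ SS = Set.univ := by
    ext x
    simp only [Set.mem_sUnion, Set.mem_univ, iff_true]
    by_cases hx : x ∈ Ω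
    · obtain ⟨p, hp⟩ := hcover x hx
      exact ⟨A p, Set.mem_insert_of_mem _ ⟨p, rfl⟩, hp⟩
    · exact ⟨Ωᶜ, Set.mem_insert _ _, hx⟩
  have hSF : SigmaFinite (μ.restrict Ω) := by
    refine Measure.sigmaFinite_of_countable hSS_count ?_ hSS_cover
    rintro s hs
    rcases hs with rfl | ⟨p, rfl⟩
    · rw [Measure.restrict_apply hΩ0.compl, Set.compl_inter_self]
      simp
    · exact lt_of_le_of_lt (Measure.le_iff'.1 Measure.restrict_le_self _) (hAfin p)
  haveI hSFtrim : SigmaFinite ((μ.restrict Ω).trim hm) := by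
    refine @Measure.sigmaFinite_of_countable X m _ SS hSS_count ?_ hSS_cover
    rintro s hs
    rcases hs with rfl | ⟨p, rfl⟩
    · rw [trim_measurableSet_eq hm hΩm.compl, Measure.restrict_apply hΩ0.compl,
        Set.compl_inter_self]
      simp
    · rw [trim_measurableSet_eq hm (hAm p)]
      exact lt_of_le_of_lt (Measure.le_iff'.1 Measure.restrict_le_self _) (hAfin p)
  haveI : Fact ((1:ENNReal) ≤ 1) := ⟨le_rfl⟩
  haveI : Fact ((1:ENNReal) ≠ ⊤) := ⟨ENNReal.one_ne_top⟩
  set RR := @SepSubAux.restrictL X m0 μ Ω with hRR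
  set CC := condExpL1CLM ℝ hm (μ.restrict Ω) with hCC
  set EE := @SepSubAux.extendL X m0 μ Ω hΩ0 with hEE
  set P : Lp ℝ 1 μ →L[ℝ] Lp ℝ 1 μ := EE.comp (CC.comp RR) with hPdef
  set Fset : Set (Lp ℝ 1 μ) := {f : Lp ℝ 1 μ | ∃ gg : X → ℝ, Measurable[m] gg ∧
    (∀ x ∉ Ω, gg x = 0) ∧ (f : X → ℝ) =ᵐ[μ] gg} with hFsetdef
  have zero_mem : (0 : Lp ℝ 1 μ) ∈ Fset :=
    ⟨fun _ => 0, @measurable_const ℝ X _ m 0, fun _ _ => rfl, Lp.coeFn_zero ℝ 1 μ⟩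
  set F : Submodule ℝ (Lp ℝ 1 μ) :=
    { carrier := Fset
      zero_mem' := zero_mem
      add_mem' := fun {f₁ f₂} h1 h2 => by
        obtain ⟨g1, hg1m, hg10, hfg1⟩ := h1
        obtain ⟨g2, hg2m, hg20, hfg2⟩ := h2
        exact ⟨g1 + g2, hg1m.add hg2m, fun x hx => by simp [hg10 x hx, hg20 x hx],
          (Lp.coeFn_add f₁ f₂).trans (hfg1.add hfg2)⟩
      smul_mem' := fun ccc f h => by
        obtain ⟨g1, hg1m, hg10, hfg1⟩ := h
        exact ⟨ccc • g1, hg1m.const_smul ccc, fun x hx => by simp [hg10 x hx],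
          (Lp.coeFn_smul ccc f).trans (hfg1.const_smul ccc)⟩ } with hFdef
  have hPcoe : ∀ f : Lp ℝ 1 μ, (P f : X → ℝ) =ᵐ[μ] Ω.indicator (CC (RR f) : X → ℝ) :=
    fun f => @SepSubAux.extendL_coe X m0 μ Ω hΩ0 (CC (RR f))
  have hfix : ∀ f ∈ Fset, P f = f := by
    rintro f ⟨gg, hggm, hgg0, hfg⟩
    have h1 : (RR f : X → ℝ) =ᵐ[μ.restrict Ω] gg :=
      (@SepSubAux.restrictL_coe X m0 μ Ω f).trans (ae_restrict_of_ae hfg)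
    have h2 : AEStronglyMeasurable[m] (RR f : X → ℝ) (μ.restrict Ω) :=
      ⟨gg, hggm.stronglyMeasurable, h1⟩
    have h3 : CC (RR f) = RR f := condExpL1CLM_of_aestronglyMeasurable' (RR f) h2
    apply Lp.ext
    have h4 := hPcoe f
    rw [h3] at h4
    refine h4.trans ?_
    refine (@SepSubAux.indicator_ae_congr X m0 μ Ω hΩ0 _ _ h1).trans ?_
    rw [Set.indicator_eq_self.2 (Function.support_subset_iff'.2 hgg0)]
    exact hfg.symm
  have hrange_sub : ∀ f : Lp ℝ 1 μ, P f ∈ Fset := by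
    intro f
    obtain ⟨g₀, hg₀sm, hy⟩ := aestronglyMeasurable_condExpL1CLM (hm := hm) (RR f)
    refine ⟨Ω.indicator g₀, (hg₀sm.measurable).indicator hΩm,
      fun x hx => Set.indicator_of_notMem hx _, ?_⟩
    exact (hPcoe f).trans (@SepSubAux.indicator_ae_congr X m0 μ Ω hΩ0 _ _ hy)
  have hrange : Set.range P = Fset := by
    apply Set.Subset.antisymm
    · rintro _ ⟨f, rfl⟩
      exact hrange_sub f
    · intro f hf
      exact ⟨f, hfix f hf⟩
  have hclosed : IsClosed Fset := by
    have hsetEq : Fset = {f : Lp ℝ 1 μ | P f = f} := by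
      ext f
      constructor
      · exact fun hf => hfix f hf
      · intro hf
        rw [← hrange]
        exact ⟨f, hf⟩
    rw [hsetEq]
    exact isClosed_eq P.continuous continuous_id
  have he_mem : ∀ n, e n ∈ Fset := fun n =>
    ⟨g n, hgm n, fun x hx => hnot x hx n, Filter.EventuallyEq.rfl⟩
  have hc_F : c ⊆ Fset := by
    intro f hf
    have hfr : f ∈ Set.range e := he ▸ Set.mem_insert_of_mem _ hf
    obtain ⟨n, rfl⟩ := hfr
    exact he_mem n
  have hM_sub : M ⊆ Fset := hc_sub.trans (closure_minimal hc_F hclosed)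
  have hlat : ∀ f ∈ Fset, |f| ∈ Fset := by
    rintro f ⟨gg, hggm, hgg0, hfg⟩
    exact ⟨fun x => |gg x|, hggm.abs, fun x hx => by simp [hgg0 x hx],
      (Lp.coeFn_abs f).trans (hfg.mono fun x hx => by simp [hx])⟩
  haveI := hCG
  have hsep : TopologicalSpace.IsSeparable Fset := by
    haveI : SecondCountableTopology (Lp ℝ 1 ((μ.restrict Ω).trim hm)) := inferInstance
    set T : Lp ℝ 1 ((μ.restrict Ω).trim hm) → Lp ℝ 1 μ := fun h =>
      EE (((lpMeasToLpTrimLie ℝ ℝ 1 (μ.restrict Ω) hm).symm h :) :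
        Lp ℝ 1 (μ.restrict Ω)) with hTdef
    have hTc : Continuous T := by
      refine EE.continuous.comp ?_
      exact continuous_induced_dom.comp (LinearIsometryEquiv.continuous _)
    have hFsub : Fset ⊆ Set.range T := by
      intro f hf
      have h2 : AEStronglyMeasurable[m] (CC (RR f) : X → ℝ) (μ.restrict Ω) :=
        aestronglyMeasurable_condExpL1CLM (hm := hm) (RR f)
      refine ⟨lpMeasToLpTrimLie ℝ ℝ 1 (μ.restrict Ω) hm ⟨CC (RR f), h2⟩, ?_⟩
      rw [hTdef]
      simp only [LinearIsometryEquiv.symm_apply_apply]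
      show EE (CC (RR f)) = f
      exact hfix f hf
    exact (TopologicalSpace.isSeparable_range hTc).mono hFsub
  have hnorm : ‖P‖ ≤ 1 := by
    have h1 : ‖P‖ ≤ ‖EE‖ * ‖CC.comp RR‖ := ContinuousLinearMap.opNorm_comp_le _ _
    have h2 : ‖CC.comp RR‖ ≤ ‖CC‖ * ‖RR‖ := ContinuousLinearMap.opNorm_comp_le _ _
    have hEn := @SepSubAux.norm_extendL_le X m0 μ Ω hΩ0
    have hRn := @SepSubAux.norm_restrictL_le X m0 μ Ω
    have hCn : ‖CC‖ ≤ 1 :=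
      L1.norm_setToL1_le (dominatedFinMeasAdditive_condExpInd ℝ hm (μ.restrict Ω)) zero_le_one
    nlinarith [norm_nonneg P, norm_nonneg EE, norm_nonneg CC, norm_nonneg RR,
      norm_nonneg (CC.comp RR)]
  exact ⟨Ω, m, hm, hCG, hΩm, hSF, F, rfl, hM_sub, hclosed, hlat, hsep, P, hnorm, hrange, hfix⟩
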